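/- Let G = (V,E) be a finite simple graph, S ⊆ V nonempty, and for y ∈ S let N̂_S(y) = |{y' ∈ S : y' = y or (y',y) ∉ E}| ≥ 1. Define g(S) = (1/|V|) Σ_{y∈S} 1/N̂_S(y). Suppose max_{y∈S} N̂_S(y) > 1 and let y* ∈ S achieve this maximum. Then g(S \ {y*}) ≥ g(S). -/

import Mathlib

open Finset

/-- `Nhat G S y` is the number of vertices of `S` that are not adjacent to `y`
(counting `y` itself). -/
def Nhat {V : Type*} [DecidableEq V] (G : SimpleGraph V) [DecidableRel G.Adj]
    (S : Finset V) (y : V) : ℕ :=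
  (S.filter fun y' => y' = y ∨ ¬ G.Adj y' y).card

/-- `g G S = (1/|V|) Σ_{y ∈ S} 1 / N̂_S(y)`. -/
noncomputable def g {V : Type*} [Fintype V] [DecidableEq V] (G : SimpleGraph V)
    [DecidableRel G.Adj] (S : Finset V) : ℝ :=
  (1 / (Fintype.card V : ℝ)) * ∑ y ∈ S, 1 / (Nhat G S y : ℝ)

/-- Removing from `S` a vertex `y*` maximizing `N̂_S`, when `N̂_S(y*) > 1`,
does not decrease `g`. -/
theorem stmt_5 {V : Type*} [Fintype V] [DecidableEq V] (G : SimpleGraph V)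
    [DecidableRel G.Adj] (S : Finset V) (hS : S.Nonempty)
    (ystar : V) (hy : ystar ∈ S) (hgt : 1 < Nhat G S ystar)
    (hmax : ∀ y ∈ S, Nhat G S y ≤ Nhat G S ystar) :
    g G S ≤ g G (S.erase ystar) := by
  classical
  set S' := S.erase ystar with hS'def
  set M := Nhat G S ystar with hMdef
  -- value of Nhat on the erased set
  have herase : ∀ y ∈ S', Nhat G S' y =
      if G.Adj ystar y then Nhat G S y else Nhat G S y - 1 := by
    intro y hyS'
    have hne : y ≠ ystar := (Finset.mem_erase.1 hyS').1
    unfold Nhat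
    rw [hS'def, Finset.filter_erase]
    by_cases hadj : G.Adj ystar y
    · rw [if_pos hadj, Finset.erase_eq_of_notMem]
      intro hmem
      rcases (Finset.mem_filter.1 hmem).2 with h | h
      · exact hne h.symm
      · exact h hadj
    · rw [if_neg hadj, Finset.card_erase_of_mem]
      exact Finset.mem_filter.2 ⟨hy, Or.inr hadj⟩
  set T := S'.filter (fun y => ¬ G.Adj ystar y) with hTdef
  -- facts about elements of T
  have hT2 : ∀ y ∈ T, 2 ≤ Nhat G S y := by
    intro y hyT
    have hyS' : y ∈ S' := (Finset.mem_filter.1 hyT).1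
    have hna : ¬ G.Adj ystar y := (Finset.mem_filter.1 hyT).2
    have hne : y ≠ ystar := (Finset.mem_erase.1 hyS').1
    have hyS : y ∈ S := Finset.mem_of_mem_erase hyS'
    refine Finset.one_lt_card.2 ⟨y, ?_, ystar, ?_, hne⟩
    · exact Finset.mem_filter.2 ⟨hyS, Or.inl rfl⟩
    · exact Finset.mem_filter.2 ⟨hy, Or.inr hna⟩
  -- cardinality of T
  have hTcard : T.card = M - 1 := by
    have : T = (S.filter fun y' => y' = ystar ∨ ¬ G.Adj y' ystar).erase ystar := by
      ext a
      simp only [hTdef, hS'def, Finset.mem_filter, Finset.mem_erase]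
      constructor
      · rintro ⟨⟨hne, haS⟩, hna⟩
        exact ⟨hne, haS, Or.inr (fun h => hna (G.adj_symm h))⟩
      · rintro ⟨hne, haS, h⟩
        rcases h with h | h
        · exact absurd h hne
        · exact ⟨⟨hne, haS⟩, fun hadj => h (G.adj_symm hadj)⟩
    rw [this, Finset.card_erase_of_mem (Finset.mem_filter.2 ⟨hy, Or.inl rfl⟩)]
    rfl
  have hM2 : (2 : ℝ) ≤ (M : ℝ) := by exact_mod_cast hgt
  have hM0 : (M : ℝ) ≠ 0 := by linarith
  have hM1 : (M : ℝ) - 1 ≠ 0 := by linarith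
  -- main sum inequality
  have key : ∑ y ∈ S, 1/(Nhat G S y : ℝ) ≤ ∑ y ∈ S', 1/(Nhat G S' y : ℝ) := by
    rw [← Finset.sum_erase_add S _ hy, ← hS'def, ← hMdef]
    rw [← Finset.sum_filter_add_sum_filter_not S' (fun y => ¬ G.Adj ystar y)
        (fun y => 1/(Nhat G S y : ℝ)),
        ← Finset.sum_filter_add_sum_filter_not S' (fun y => ¬ G.Adj ystar y)
        (fun y => 1/(Nhat G S' y : ℝ)), ← hTdef]
    have heq : ∑ y ∈ S'.filter (fun y => ¬¬ G.Adj ystar y), 1/(Nhat G S' y : ℝ)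
        = ∑ y ∈ S'.filter (fun y => ¬¬ G.Adj ystar y), 1/(Nhat G S y : ℝ) := by
      refine Finset.sum_congr rfl fun y hyf => ?_
      have h := herase y (Finset.mem_filter.1 hyf).1
      rw [if_pos (not_not.1 (Finset.mem_filter.1 hyf).2)] at h
      rw [h]
    rw [heq]
    have hmain : ∑ y ∈ T, 1/(Nhat G S y : ℝ) + 1/(M : ℝ)
        ≤ ∑ y ∈ T, 1/(Nhat G S' y : ℝ) := by
      have hstep : ∀ y ∈ T, 1/((M:ℝ)-1) - 1/(M:ℝ)
          ≤ 1/(Nhat G S' y : ℝ) - 1/(Nhat G S y : ℝ) := by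
        intro y hyT
        have hyS' : y ∈ S' := (Finset.mem_filter.1 hyT).1
        have hna : ¬ G.Adj ystar y := (Finset.mem_filter.1 hyT).2
        have h2 : 2 ≤ Nhat G S y := hT2 y hyT
        have hnM : Nhat G S y ≤ M := hmax y (Finset.mem_of_mem_erase hyS')
        have hcast : (Nhat G S' y : ℝ) = (Nhat G S y : ℝ) - 1 := by
          rw [herase y hyS', if_neg hna, Nat.cast_sub (by omega)]
          simp
        set n : ℝ := (Nhat G S y : ℝ) with hn
        have hn2 : (2:ℝ) ≤ n := by rw [hn]; exact_mod_cast h2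
        have hnM' : n ≤ (M:ℝ) := by rw [hn]; exact_mod_cast hnM
        have hn0 : n ≠ 0 := by linarith
        have hn1 : n - 1 ≠ 0 := by linarith
        rw [hcast]
        have e1 : 1/(n-1) - 1/n = 1/(n*(n-1)) := by field_simp; ring
        have e2 : 1/((M:ℝ)-1) - 1/(M:ℝ) = 1/((M:ℝ)*((M:ℝ)-1)) := by field_simp; ring
        rw [e1, e2]
        apply one_div_le_one_div_of_le
        · have : (0:ℝ) < n - 1 := by linarith
          nlinarith
        · apply mul_le_mul hnM' (by linarith) (by linarith) (by linarith)
      have hsum : (T.card : ℝ) * (1/((M:ℝ)-1) - 1/(M:ℝ))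
          ≤ ∑ y ∈ T, (1/(Nhat G S' y : ℝ) - 1/(Nhat G S y : ℝ)) := by
        have := Finset.card_nsmul_le_sum T _ _ hstep
        simpa [nsmul_eq_mul] using this
      rw [Finset.sum_sub_distrib] at hsum
      have hcardcast : (T.card : ℝ) = (M : ℝ) - 1 := by
        rw [hTcard, Nat.cast_sub (by omega)]; simp
      rw [hcardcast] at hsum
      have : ((M:ℝ) - 1) * (1/((M:ℝ)-1) - 1/(M:ℝ)) = 1/(M:ℝ) := by
        field_simp
        ring
      linarith
    linarith
  unfold g
  apply mul_le_mul_of_nonneg_left key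
  positivity
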